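/- Let (P, L) be a finite projective plane of order q with n = q^2 + q + 1, let c > 0, and suppose P_1, ..., P_{d+1} ⊆ P are disjoint sets each of size at least c·n. If n ≥ (2(d+1)/c)^2, then the set L' of lines meeting every P_i satisfies |L'| ≥ |L|/2. -/

import Mathlib

section Aux
set_option linter.unusedSectionVars false
set_option maxHeartbeats 1000000
variable {P : Type} [Fintype P] [DecidableEq P] {q : ℕ} {L : Finset (Finset P)}


lemma exists_line_avoiding
    (h1 : ∀ p₁ p₂ : P, p₁ ≠ p₂ → ∃! ℓ, ℓ ∈ L ∧ p₁ ∈ ℓ ∧ p₂ ∈ ℓ)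
    (h4 : ∃ s : Finset P, s.card = 4 ∧ ∀ ℓ ∈ L, (s ∩ ℓ).card ≤ 2)
    (p : P) : ∃ ℓ ∈ L, p ∉ ℓ := by
  obtain ⟨s, hs4, hs2⟩ := h4
  have hcard : 3 ≤ (s.erase p).card := by
    have := Finset.pred_card_le_card_erase (a := p) (s := s)
    omega
  obtain ⟨a, ha⟩ := Finset.card_pos.mp (by omega : 0 < (s.erase p).card)
  have hca : 2 ≤ ((s.erase p).erase a).card := by
    rw [Finset.card_erase_of_mem ha]; omega
  obtain ⟨b, hb⟩ := Finset.card_pos.mp (by omega : 0 < ((s.erase p).erase a).card)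
  have hcb : 1 ≤ (((s.erase p).erase a).erase b).card := by
    rw [Finset.card_erase_of_mem hb]; omega
  obtain ⟨c, hc⟩ := Finset.card_pos.mp (by omega : 0 < (((s.erase p).erase a).erase b).card)
  have hcb' : c ∈ (s.erase p).erase a := Finset.mem_of_mem_erase hc
  have hba : b ≠ a := Finset.ne_of_mem_erase hb
  have hcb2 : c ≠ b := Finset.ne_of_mem_erase hc
  have hca2 : c ≠ a := Finset.ne_of_mem_erase hcb'
  have hbe : b ∈ s.erase p := Finset.mem_of_mem_erase hb
  have hce : c ∈ s.erase p := Finset.mem_of_mem_erase hcb'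
  have hap : a ≠ p := Finset.ne_of_mem_erase ha
  have hbp : b ≠ p := Finset.ne_of_mem_erase hbe
  have hcp : c ≠ p := Finset.ne_of_mem_erase hce
  have has : a ∈ s := Finset.mem_of_mem_erase ha
  have hbs : b ∈ s := Finset.mem_of_mem_erase hbe
  have hcs : c ∈ s := Finset.mem_of_mem_erase hce
  by_contra hcon
  push_neg at hcon
  -- all lines contain p
  obtain ⟨lab, ⟨labL, halab, hblab⟩, _⟩ := h1 a b (Ne.symm hba)
  obtain ⟨lac, ⟨lacL, halac, hclac⟩, _⟩ := h1 a c (Ne.symm hca2)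
  have hplab : p ∈ lab := hcon lab labL
  have hplac : p ∈ lac := hcon lac lacL
  obtain ⟨lpa, ⟨_, _, _⟩, hpau⟩ := h1 p a (Ne.symm hap)
  have e1 : lab = lpa := hpau lab ⟨labL, hplab, halab⟩
  have e2 : lac = lpa := hpau lac ⟨lacL, hplac, halac⟩
  have hline : c ∈ lab := by rw [e1, ← e2]; exact hclac
  have hsub : {a, b, c} ⊆ s ∩ lab := by
    intro x hx
    simp only [Finset.mem_insert, Finset.mem_singleton] at hx
    rcases hx with rfl | rfl | rfl <;> simp [Finset.mem_inter, has, hbs, hcs, halab, hblab, hline]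
  have h3le : 3 ≤ (s ∩ lab).card := by
    have : ({a, b, c} : Finset P).card = 3 := by
      rw [Finset.card_insert_of_notMem (by simp [hba.symm, hca2.symm]),
        Finset.card_insert_of_notMem (by simp [hcb2.symm]), Finset.card_singleton]
    calc 3 = ({a, b, c} : Finset P).card := this.symm
    _ ≤ _ := Finset.card_le_card hsub
  exact absurd (hs2 lab labL) (by omega)

lemma card_lines_through
    (h1 : ∀ p₁ p₂ : P, p₁ ≠ p₂ → ∃! ℓ, ℓ ∈ L ∧ p₁ ∈ ℓ ∧ p₂ ∈ ℓ)
    (h2 : ∀ ℓ₁ ∈ L, ∀ ℓ₂ ∈ L, ℓ₁ ≠ ℓ₂ → ∃! p : P, p ∈ ℓ₁ ∧ p ∈ ℓ₂)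
    (h3 : ∀ ℓ ∈ L, ℓ.card = q + 1)
    (h4 : ∃ s : Finset P, s.card = 4 ∧ ∀ ℓ ∈ L, (s ∩ ℓ).card ≤ 2)
    (p : P) : (L.filter (fun ℓ => p ∈ ℓ)).card = q + 1 := by
  obtain ⟨ℓ0, hℓ0, hp0⟩ := exists_line_avoiding h1 h4 p
  rw [← h3 ℓ0 hℓ0]
  refine (Finset.card_bij (fun x hx => (h1 p x (fun h => hp0 (h ▸ hx))).exists.choose) ?_ ?_ ?_).symm
  · intro x hx
    obtain ⟨hL, hp, hx'⟩ := (h1 p x (fun h => hp0 (h ▸ hx))).exists.choose_spec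
    exact Finset.mem_filter.mpr ⟨hL, hp⟩
  · intro x hx y hy heq
    by_contra hxy
    obtain ⟨hLx, hpx, hxx⟩ := (h1 p x (fun h => hp0 (h ▸ hx))).exists.choose_spec
    obtain ⟨hLy, hpy, hyy⟩ := (h1 p y (fun h => hp0 (h ▸ hy))).exists.choose_spec
    obtain ⟨lxy, _, hxyu⟩ := h1 x y hxy
    have e1 := hxyu _ ⟨hLx, hxx, heq ▸ hyy⟩
    have e2 := hxyu ℓ0 ⟨hℓ0, hx, hy⟩
    exact hp0 (by rw [e2, ← e1]; exact hpx)
  · intro ℓ hℓ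
    obtain ⟨hℓL, hpℓ⟩ := Finset.mem_filter.mp hℓ
    have hne : ℓ ≠ ℓ0 := fun h => hp0 (h ▸ hpℓ)
    obtain ⟨x, ⟨hxℓ, hxℓ0⟩, _⟩ := h2 ℓ hℓL ℓ0 hℓ0 hne
    refine ⟨x, hxℓ0, ?_⟩
    have hpx : p ≠ x := fun h => hp0 (h ▸ hxℓ0)
    obtain ⟨hL', hp', hx'⟩ := (h1 p x (fun h => hp0 (h ▸ hxℓ0))).exists.choose_spec
    obtain ⟨lpx, _, hpxu⟩ := h1 p x hpx
    have e1 := hpxu _ ⟨hL', hp', hx'⟩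
    have e2 := hpxu ℓ ⟨hℓL, hpℓ, hxℓ⟩
    exact e1.trans e2.symm


lemma pair_count
    (h1 : ∀ p₁ p₂ : P, p₁ ≠ p₂ → ∃! ℓ, ℓ ∈ L ∧ p₁ ∈ ℓ ∧ p₂ ∈ ℓ)
    {a b : P} (hab : a ≠ b) : (L.filter (fun ℓ => a ∈ ℓ ∧ b ∈ ℓ)).card = 1 := by
  obtain ⟨ℓ0, ⟨hL, ha, hb⟩, hu⟩ := h1 a b hab
  rw [Finset.card_eq_one]
  refine ⟨ℓ0, ?_⟩
  ext ℓ
  simp only [Finset.mem_filter, Finset.mem_singleton]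
  constructor
  · rintro ⟨h, ha', hb'⟩; exact hu ℓ ⟨h, ha', hb'⟩
  · rintro rfl; exact ⟨hL, ha, hb⟩

lemma card_points
    (h1 : ∀ p₁ p₂ : P, p₁ ≠ p₂ → ∃! ℓ, ℓ ∈ L ∧ p₁ ∈ ℓ ∧ p₂ ∈ ℓ)
    (h2 : ∀ ℓ₁ ∈ L, ∀ ℓ₂ ∈ L, ℓ₁ ≠ ℓ₂ → ∃! p : P, p ∈ ℓ₁ ∧ p ∈ ℓ₂)
    (h3 : ∀ ℓ ∈ L, ℓ.card = q + 1)
    (h4 : ∃ s : Finset P, s.card = 4 ∧ ∀ ℓ ∈ L, (s ∩ ℓ).card ≤ 2) :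
    Fintype.card P = q ^ 2 + q + 1 := by
  obtain ⟨s, hs4, _⟩ := h4
  obtain ⟨p, -⟩ := Finset.card_pos.mp (by omega : 0 < s.card)
  set Lp := L.filter (fun ℓ => p ∈ ℓ) with hLp
  have hunion : Lp.biUnion (fun ℓ => ℓ.erase p) = Finset.univ.erase p := by
    ext x
    simp only [Finset.mem_biUnion, Finset.mem_erase, Finset.mem_univ, and_true]
    constructor
    · rintro ⟨ℓ, -, hx, -⟩; exact hx
    · intro hx
      obtain ⟨ℓ, ⟨hL, hp', hx'⟩, -⟩ := h1 p x (Ne.symm hx)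
      exact ⟨ℓ, Finset.mem_filter.mpr ⟨hL, hp'⟩, hx, hx'⟩
  have hdisj : ∀ ℓ₁ ∈ Lp, ∀ ℓ₂ ∈ Lp, ℓ₁ ≠ ℓ₂ →
      Disjoint (ℓ₁.erase p) (ℓ₂.erase p) := by
    intro ℓ₁ hℓ₁ ℓ₂ hℓ₂ hne
    obtain ⟨hL₁, hp₁⟩ := Finset.mem_filter.mp hℓ₁
    obtain ⟨hL₂, hp₂⟩ := Finset.mem_filter.mp hℓ₂
    rw [Finset.disjoint_left]
    intro x hx₁ hx₂
    obtain ⟨y, -, hy⟩ := h2 ℓ₁ hL₁ ℓ₂ hL₂ hne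
    have e1 := hy x ⟨Finset.mem_of_mem_erase hx₁, Finset.mem_of_mem_erase hx₂⟩
    have e2 := hy p ⟨hp₁, hp₂⟩
    exact Finset.ne_of_mem_erase hx₁ (e1.trans e2.symm)
  have hcard := Finset.card_biUnion hdisj
  rw [hunion] at hcard
  have h1' : (Finset.univ.erase p).card = Fintype.card P - 1 := by
    rw [Finset.card_erase_of_mem (Finset.mem_univ p), Finset.card_univ]
  have h2' : ∑ ℓ ∈ Lp, (ℓ.erase p).card = Lp.card * q := by
    rw [Finset.sum_congr rfl (fun ℓ hℓ => ?_), Finset.sum_const, smul_eq_mul]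
    obtain ⟨hL, hp'⟩ := Finset.mem_filter.mp hℓ
    rw [Finset.card_erase_of_mem hp', h3 ℓ hL]
    omega
  have h3' : Lp.card = q + 1 := card_lines_through h1 h2 h3 ⟨s, hs4, ‹_›⟩ p
  have hpos : 0 < Fintype.card P := Fintype.card_pos_iff.mpr ⟨p⟩
  rw [h1', h2', h3'] at hcard
  have hqq : (q + 1) * q = q ^ 2 + q := by ring
  omega

lemma card_L_eq
    (h1 : ∀ p₁ p₂ : P, p₁ ≠ p₂ → ∃! ℓ, ℓ ∈ L ∧ p₁ ∈ ℓ ∧ p₂ ∈ ℓ)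
    (h2 : ∀ ℓ₁ ∈ L, ∀ ℓ₂ ∈ L, ℓ₁ ≠ ℓ₂ → ∃! p : P, p ∈ ℓ₁ ∧ p ∈ ℓ₂)
    (h3 : ∀ ℓ ∈ L, ℓ.card = q + 1)
    (h4 : ∃ s : Finset P, s.card = 4 ∧ ∀ ℓ ∈ L, (s ∩ ℓ).card ≤ 2) :
    L.card = q ^ 2 + q + 1 := by
  have key : ∑ ℓ ∈ L, ℓ.card = ∑ x : P, (L.filter (fun ℓ => x ∈ ℓ)).card := by
    have : ∀ ℓ : Finset P, ℓ.card = ∑ x : P, if x ∈ ℓ then 1 else 0 := by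
      intro ℓ
      rw [← Finset.card_filter]
      congr 1
      ext x
      simp [Finset.mem_filter]
    rw [Finset.sum_congr rfl (fun ℓ _ => this ℓ), Finset.sum_comm]
    exact Finset.sum_congr rfl (fun x _ => (Finset.card_filter _ _).symm)
  have lhs : ∑ ℓ ∈ L, ℓ.card = L.card * (q + 1) := by
    rw [Finset.sum_congr rfl h3, Finset.sum_const, smul_eq_mul]
  have rhs : ∑ x : P, (L.filter (fun ℓ => x ∈ ℓ)).card = Fintype.card P * (q + 1) := by
    rw [Finset.sum_congr rfl (fun x _ => card_lines_through h1 h2 h3 h4 x),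
      Finset.sum_const, smul_eq_mul, Finset.card_univ]
  rw [lhs, rhs, card_points h1 h2 h3 h4] at key
  exact Nat.eq_of_mul_eq_mul_right (by omega) key


lemma sum_inter_card
    (h1 : ∀ p₁ p₂ : P, p₁ ≠ p₂ → ∃! ℓ, ℓ ∈ L ∧ p₁ ∈ ℓ ∧ p₂ ∈ ℓ)
    (h2 : ∀ ℓ₁ ∈ L, ∀ ℓ₂ ∈ L, ℓ₁ ≠ ℓ₂ → ∃! p : P, p ∈ ℓ₁ ∧ p ∈ ℓ₂)
    (h3 : ∀ ℓ ∈ L, ℓ.card = q + 1)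
    (h4 : ∃ s : Finset P, s.card = 4 ∧ ∀ ℓ ∈ L, (s ∩ ℓ).card ≤ 2)
    (A : Finset P) : ∑ ℓ ∈ L, (ℓ ∩ A).card = A.card * (q + 1) := by
  have key : ∀ ℓ : Finset P, (ℓ ∩ A).card = ∑ a ∈ A, if a ∈ ℓ then 1 else 0 := by
    intro ℓ
    rw [← Finset.card_filter]
    congr 1
    ext x
    simp [Finset.mem_filter, Finset.mem_inter, and_comm]
  rw [Finset.sum_congr rfl (fun ℓ _ => key ℓ), Finset.sum_comm]
  rw [Finset.sum_congr rfl (fun a (_ : a ∈ A) => (Finset.card_filter (fun ℓ => a ∈ ℓ) L).symm)]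
  rw [Finset.sum_congr rfl (fun a (_ : a ∈ A) => card_lines_through h1 h2 h3 h4 a),
    Finset.sum_const, smul_eq_mul]

lemma sum_inter_card_sq
    (h1 : ∀ p₁ p₂ : P, p₁ ≠ p₂ → ∃! ℓ, ℓ ∈ L ∧ p₁ ∈ ℓ ∧ p₂ ∈ ℓ)
    (h2 : ∀ ℓ₁ ∈ L, ∀ ℓ₂ ∈ L, ℓ₁ ≠ ℓ₂ → ∃! p : P, p ∈ ℓ₁ ∧ p ∈ ℓ₂)
    (h3 : ∀ ℓ ∈ L, ℓ.card = q + 1)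
    (h4 : ∃ s : Finset P, s.card = 4 ∧ ∀ ℓ ∈ L, (s ∩ ℓ).card ≤ 2)
    (A : Finset P) : ∑ ℓ ∈ L, (ℓ ∩ A).card ^ 2 = A.card * (A.card + q) := by
  have key : ∀ ℓ : Finset P, (ℓ ∩ A).card ^ 2
      = ∑ a ∈ A, ∑ b ∈ A, if a ∈ ℓ ∧ b ∈ ℓ then 1 else 0 := by
    intro ℓ
    have h : (ℓ ∩ A).card = ∑ a ∈ A, if a ∈ ℓ then 1 else 0 := by
      rw [← Finset.card_filter]
      congr 1
      ext x
      simp [Finset.mem_filter, Finset.mem_inter, and_comm]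
    rw [h, sq, Finset.sum_mul_sum]
    refine Finset.sum_congr rfl (fun a _ => Finset.sum_congr rfl (fun b _ => ?_))
    by_cases ha : a ∈ ℓ <;> by_cases hb : b ∈ ℓ <;> simp [ha, hb]
  rw [Finset.sum_congr rfl (fun ℓ _ => key ℓ), Finset.sum_comm]
  have swap2 : ∑ a ∈ A, ∑ ℓ ∈ L, ∑ b ∈ A, (if a ∈ ℓ ∧ b ∈ ℓ then 1 else 0)
      = ∑ a ∈ A, ∑ b ∈ A, ∑ ℓ ∈ L, (if a ∈ ℓ ∧ b ∈ ℓ then 1 else 0) :=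
    Finset.sum_congr rfl (fun a _ => Finset.sum_comm)
  rw [swap2]
  have inner : ∀ a ∈ A, ∀ b ∈ A, ∑ ℓ ∈ L, (if a ∈ ℓ ∧ b ∈ ℓ then 1 else 0)
      = 1 + if a = b then q else 0 := by
    intro a _ b _
    rw [← Finset.card_filter]
    by_cases hab : a = b
    · subst hab
      simp only [and_self, eq_self_iff_true, if_true]
      rw [card_lines_through h1 h2 h3 h4 a]
      omega
    · rw [if_neg hab, pair_count h1 hab]
  rw [Finset.sum_congr rfl (fun a ha => Finset.sum_congr rfl (fun b hb => inner a ha b hb))]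
  have : ∀ a ∈ A, ∑ b ∈ A, (1 + if a = b then q else 0) = A.card + q := by
    intro a ha
    rw [Finset.sum_add_distrib, Finset.sum_const, smul_eq_mul, mul_one,
      Finset.sum_ite_eq A a (fun _ => q), if_pos ha]
  rw [Finset.sum_congr rfl this, Finset.sum_const, smul_eq_mul]

lemma expansion
    (h1 : ∀ p₁ p₂ : P, p₁ ≠ p₂ → ∃! ℓ, ℓ ∈ L ∧ p₁ ∈ ℓ ∧ p₂ ∈ ℓ)
    (h2 : ∀ ℓ₁ ∈ L, ∀ ℓ₂ ∈ L, ℓ₁ ≠ ℓ₂ → ∃! p : P, p ∈ ℓ₁ ∧ p ∈ ℓ₂)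
    (h3 : ∀ ℓ ∈ L, ℓ.card = q + 1)
    (h4 : ∃ s : Finset P, s.card = 4 ∧ ∀ ℓ ∈ L, (s ∩ ℓ).card ≤ 2)
    (A : Finset P) (hA : A.Nonempty) :
    ((L.filter (fun ℓ => ℓ ∩ A = ∅)).card : ℤ) * A.card
      ≤ (q : ℤ) * (q ^ 2 + q + 1) := by
  set N : ℤ := (q : ℤ) ^ 2 + q + 1 with hN
  set K : ℤ := (A.card : ℤ) with hK
  set Q : ℤ := (q : ℤ) with hQ
  have hK1 : 1 ≤ K := by
    have h0 : 0 < A.card := Finset.card_pos.mpr hA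
    rw [hK]; exact_mod_cast h0
  have hKN : K ≤ N := by
    have := Finset.card_le_card (Finset.subset_univ A)
    rw [Finset.card_univ, card_points h1 h2 h3 h4] at this
    have : (A.card : ℤ) ≤ ((q ^ 2 + q + 1 : ℕ) : ℤ) := by exact_mod_cast this
    push_cast at this
    linarith
  have hQ0 : (0 : ℤ) ≤ Q := by positivity
  set X : Finset P → ℤ := fun ℓ => ((ℓ ∩ A).card : ℤ) with hX
  have e1 : ∑ ℓ ∈ L, X ℓ = K * (Q + 1) := by
    have := sum_inter_card h1 h2 h3 h4 A
    have h' : ((∑ ℓ ∈ L, (ℓ ∩ A).card : ℕ) : ℤ) = ((A.card * (q + 1) : ℕ) : ℤ) :=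
      congrArg (fun t : ℕ => (t : ℤ)) this
    push_cast at h'
    simpa [hX, hK, hQ] using h'
  have e2 : ∑ ℓ ∈ L, X ℓ ^ 2 = K * (K + Q) := by
    have := sum_inter_card_sq h1 h2 h3 h4 A
    have h' : ((∑ ℓ ∈ L, (ℓ ∩ A).card ^ 2 : ℕ) : ℤ) = ((A.card * (A.card + q) : ℕ) : ℤ) :=
      congrArg (fun t : ℕ => (t : ℤ)) this
    push_cast at h'
    simpa [hX, hK, hQ] using h'
  have e3 : (L.card : ℤ) = N := by
    have := card_L_eq h1 h2 h3 h4
    rw [this]; push_cast; ring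
  set S : ℤ := ∑ ℓ ∈ L, (N * X ℓ - K * (Q + 1)) ^ 2 with hS
  have hSval : S = N ^ 2 * (K * (K + Q)) - N * (K * (Q + 1)) ^ 2 := by
    have expand : S = ∑ ℓ ∈ L, (N ^ 2 * X ℓ ^ 2 - 2 * N * (K * (Q + 1)) * X ℓ
        + (K * (Q + 1)) ^ 2) :=
      Finset.sum_congr rfl (fun ℓ _ => by ring)
    rw [expand, Finset.sum_add_distrib, Finset.sum_sub_distrib, ← Finset.mul_sum,
      ← Finset.mul_sum, e1, e2, Finset.sum_const, nsmul_eq_mul, e3]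
    ring
  have hlower : ((L.filter (fun ℓ => ℓ ∩ A = ∅)).card : ℤ) * (K * (Q + 1)) ^ 2 ≤ S := by
    have hsub : ∑ ℓ ∈ L.filter (fun ℓ => ℓ ∩ A = ∅), (N * X ℓ - K * (Q + 1)) ^ 2 ≤ S :=
      Finset.sum_le_sum_of_subset_of_nonneg (Finset.filter_subset _ _)
        (fun _ _ _ => sq_nonneg _)
    have heach : ∑ ℓ ∈ L.filter (fun ℓ => ℓ ∩ A = ∅), (N * X ℓ - K * (Q + 1)) ^ 2
        = ((L.filter (fun ℓ => ℓ ∩ A = ∅)).card : ℤ) * (K * (Q + 1)) ^ 2 := by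
      rw [Finset.sum_congr rfl (fun ℓ hℓ => ?_), Finset.sum_const, nsmul_eq_mul]
      have hempty : ℓ ∩ A = ∅ := (Finset.mem_filter.mp hℓ).2
      have : X ℓ = 0 := by simp [hX, hempty]
      rw [this]; ring
    rw [← heach]; exact hsub
  -- algebra: m * (K(Q+1))^2 ≤ N^2 K(K+Q) - N (K(Q+1))^2 = N K Q (N - K)
  set m : ℤ := ((L.filter (fun ℓ => ℓ ∩ A = ∅)).card : ℤ) with hm
  have hm0 : 0 ≤ m := by positivity
  have hid : N ^ 2 * (K * (K + Q)) - N * (K * (Q + 1)) ^ 2 = N * K * Q * (N - K) := by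
    rw [hN]; ring
  have step1 : m * (K * (Q + 1)) ^ 2 ≤ N * K * Q * (N - K) := by
    rw [← hid]; rw [← hSval]; exact hlower
  have hNQ : N ≤ (Q + 1) ^ 2 := by rw [hN]; nlinarith
  have step2 : N * K * Q * (N - K) ≤ (Q * N) * (K * (Q + 1) ^ 2) := by
    have h1' : N * K * Q * (N - K) ≤ N * K * Q * N := by
      have : 0 ≤ N * K * Q := by positivity
      nlinarith
    have h2' : N * K * Q * N ≤ (Q * N) * (K * (Q + 1) ^ 2) := by nlinarith
    linarith
  have key : (m * K) * (K * (Q + 1) ^ 2) ≤ (Q * N) * (K * (Q + 1) ^ 2) := by nlinarith [step1, step2, hK1, hm0]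
  have hpos : 0 < K * (Q + 1) ^ 2 := by positivity
  have := le_of_mul_le_mul_right key hpos
  simpa [hm, hK, hQ, hN] using this

end Aux


theorem most_lines_meet_all_parts
    (q : ℕ) (hq : 2 ≤ q)
    (P : Type) [Fintype P] [DecidableEq P]
    (L : Finset (Finset P))
    (h1 : ∀ p₁ p₂ : P, p₁ ≠ p₂ → ∃! ℓ, ℓ ∈ L ∧ p₁ ∈ ℓ ∧ p₂ ∈ ℓ)
    (h2 : ∀ ℓ₁ ∈ L, ∀ ℓ₂ ∈ L, ℓ₁ ≠ ℓ₂ → ∃! p : P, p ∈ ℓ₁ ∧ p ∈ ℓ₂)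
    (h3 : ∀ ℓ ∈ L, ℓ.card = q + 1)
    (h4 : ∃ s : Finset P, s.card = 4 ∧ ∀ ℓ ∈ L, (s ∩ ℓ).card ≤ 2)
    (n : ℕ) (hn : n = q ^ 2 + q + 1)
    (d : ℕ) (c : ℝ) (hc : 0 < c)
    (Ps : Fin (d + 1) → Finset P)
    (hdisj : ∀ i j, i ≠ j → Disjoint (Ps i) (Ps j))
    (hsize : ∀ i, c * (n : ℝ) ≤ ((Ps i).card : ℝ))
    (hbig : ((2 * ((d : ℝ) + 1) / c) ^ 2) ≤ (n : ℝ)) :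
    ((L.filter (fun ℓ => ∀ i, (ℓ ∩ Ps i).Nonempty)).card : ℝ) ≥ (L.card : ℝ) / 2 := by
  classical
  have hcardL : L.card = q ^ 2 + q + 1 := card_L_eq h1 h2 h3 h4
  have hn0 : (0 : ℝ) < n := by
    rw [hn]; push_cast; positivity
  -- each part is nonempty
  have hPsne : ∀ i, (Ps i).Nonempty := by
    intro i
    rw [← Finset.card_pos]
    by_contra h
    push_neg at h
    interval_cases h' : (Ps i).card
    · have := hsize i
      rw [h'] at this
      push_cast at this
      nlinarith
  -- bound on bad lines for each part
  have hmi : ∀ i, ((L.filter (fun ℓ => ℓ ∩ Ps i = ∅)).card : ℝ) ≤ q / c := by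
    intro i
    have hexp := expansion h1 h2 h3 h4 (Ps i) (hPsne i)
    have hexpR : ((L.filter (fun ℓ => ℓ ∩ Ps i = ∅)).card : ℝ) * ((Ps i).card : ℝ)
        ≤ (q : ℝ) * ((q : ℝ) ^ 2 + q + 1) := by exact_mod_cast hexp
    have hsz := hsize i
    have hnR : ((q : ℝ) ^ 2 + q + 1) = (n : ℝ) := by rw [hn]; push_cast; ring
    rw [hnR] at hexpR
    set m : ℝ := ((L.filter (fun ℓ => ℓ ∩ Ps i = ∅)).card : ℝ) with hm
    have hm0 : (0 : ℝ) ≤ m := by positivity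
    have step : m * (c * n) ≤ (q : ℝ) * n := le_trans (by nlinarith) hexpR
    rw [le_div_iff₀ hc]
    exact le_of_mul_le_mul_right (by nlinarith) hn0
  -- bad lines
  set bad := L.filter (fun ℓ => ¬ ∀ i, (ℓ ∩ Ps i).Nonempty) with hbad
  have hsplit : (L.filter (fun ℓ => ∀ i, (ℓ ∩ Ps i).Nonempty)).card + bad.card = L.card :=
    Finset.card_filter_add_card_filter_not _
  have hbad_sub : bad ⊆ Finset.univ.biUnion (fun i => L.filter (fun ℓ => ℓ ∩ Ps i = ∅)) := by
    intro ℓ hℓ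
    obtain ⟨hL, hnot⟩ := Finset.mem_filter.mp hℓ
    push_neg at hnot
    obtain ⟨i, hi⟩ := hnot
    exact Finset.mem_biUnion.mpr ⟨i, Finset.mem_univ i, Finset.mem_filter.mpr ⟨hL, hi⟩⟩
  have hbad_card : bad.card ≤ ∑ i, (L.filter (fun ℓ => ℓ ∩ Ps i = ∅)).card :=
    le_trans (Finset.card_le_card hbad_sub) Finset.card_biUnion_le
  have hbadR : (bad.card : ℝ) ≤ ((d : ℝ) + 1) * ((q : ℝ) / c) := by
    have h1' : (bad.card : ℝ) ≤ ∑ i, ((L.filter (fun ℓ => ℓ ∩ Ps i = ∅)).card : ℝ) := by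
      exact_mod_cast hbad_card
    have h2' : ∑ i : Fin (d + 1), ((L.filter (fun ℓ => ℓ ∩ Ps i = ∅)).card : ℝ)
        ≤ ∑ _i : Fin (d + 1), (q : ℝ) / c := Finset.sum_le_sum (fun i _ => hmi i)
    have h3' : ∑ _i : Fin (d + 1), (q : ℝ) / c = ((d : ℝ) + 1) * ((q : ℝ) / c) := by
      rw [Finset.sum_const, Finset.card_univ, Fintype.card_fin, nsmul_eq_mul]
      push_cast; ring
    linarith
  -- (d+1) q / c ≤ n / 2
  have hhalf : ((d : ℝ) + 1) * ((q : ℝ) / c) ≤ (n : ℝ) / 2 := by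
    set t : ℝ := 2 * ((d : ℝ) + 1) / c with ht
    have ht0 : 0 < t := by positivity
    have hq2 : ((q : ℝ)) ^ 2 ≤ (n : ℝ) := by
      rw [hn]; push_cast; nlinarith [Nat.cast_nonneg (α := ℝ) q]
    have htq : t * q ≤ (n : ℝ) := by
      nlinarith [sq_nonneg (t - (q : ℝ)), Nat.cast_nonneg (α := ℝ) q, hbig]
    have : ((d : ℝ) + 1) * ((q : ℝ) / c) = t * q / 2 := by
      rw [ht]; field_simp
    rw [this]
    linarith
  -- finish
  have hLn : (L.card : ℝ) = (n : ℝ) := by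
    rw [hcardL, hn]
  have hsplitR : ((L.filter (fun ℓ => ∀ i, (ℓ ∩ Ps i).Nonempty)).card : ℝ) + (bad.card : ℝ)
      = (L.card : ℝ) := by exact_mod_cast hsplit
  rw [ge_iff_le, hLn]
  linarith [hsplitR, hbadR, hhalf, hLn]
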